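/- For any invertible d-by-d real matrix A, there exists a singular matrix B with ‖A − B‖ = 1/‖A^{-1}‖; therefore the operator-norm distance from A to the set of singular matrices equals exactly 1/‖A^{-1}‖. -/

import Mathlib

open Matrix MeasureTheory
open scoped RealInnerProductSpace ENNReal NNReal

noncomputable def opNorm {d : ℕ} (A : Matrix (Fin d) (Fin d) ℝ) : ℝ :=
  ‖Matrix.toEuclideanCLM (𝕜 := ℝ) A‖

noncomputable def colDist {d : ℕ} (a : Fin d → EuclideanSpace ℝ (Fin d)) (i : Fin d) : ℝ :=
  Metric.infDist (a i) (Submodule.span ℝ (a '' {j | j ≠ i}) : Set (EuclideanSpace ℝ (Fin d)))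

noncomputable def height {d : ℕ} (a : Fin d → EuclideanSpace ℝ (Fin d)) : ℝ :=
  ⨅ i, colDist a i

lemma exists_norm_attained {d : ℕ} (hd : 0 < d)
    (S : EuclideanSpace ℝ (Fin d) →L[ℝ] EuclideanSpace ℝ (Fin d)) :
    ∃ w : EuclideanSpace ℝ (Fin d), ‖w‖ = 1 ∧ ‖S w‖ = ‖S‖ := by
  haveI : Nonempty (Fin d) := Fin.pos_iff_nonempty.mp hd
  haveI : Nontrivial (EuclideanSpace ℝ (Fin d)) := inferInstance
  have hne : (Metric.sphere (0 : EuclideanSpace ℝ (Fin d)) 1).Nonempty :=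
    NormedSpace.sphere_nonempty.mpr zero_le_one
  obtain ⟨w, hwmem, hmax⟩ := (isCompact_sphere (0 : EuclideanSpace ℝ (Fin d)) 1).exists_isMaxOn
    hne ((continuous_norm.comp S.continuous).continuousOn)
  have hw : ‖w‖ = 1 := by simpa using mem_sphere_zero_iff_norm.mp hwmem
  refine ⟨w, hw, le_antisymm (by simpa [hw] using S.le_opNorm w) ?_⟩
  refine S.opNorm_le_bound (norm_nonneg _) fun x => ?_
  rcases eq_or_ne x 0 with rfl | hx
  · simp
  · have hxn : (0:ℝ) < ‖x‖ := norm_pos_iff.mpr hx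
    have hmem : (‖x‖⁻¹ • x) ∈ Metric.sphere (0 : EuclideanSpace ℝ (Fin d)) 1 := by
      simp [norm_smul, abs_of_pos, hxn, inv_mul_cancel₀ hxn.ne']
    have h2 : ‖S (‖x‖⁻¹ • x)‖ ≤ ‖S w‖ := hmax hmem
    rw [_root_.map_smul, norm_smul, norm_inv, norm_norm] at h2
    calc ‖S x‖ = ‖x‖ * (‖x‖⁻¹ * ‖S x‖) := by field_simp
    _ ≤ ‖x‖ * ‖S w‖ := by nlinarith [norm_nonneg (S x)]
    _ = ‖S w‖ * ‖x‖ := mul_comm _ _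

lemma inner_eq_dot {d : ℕ} (u x : EuclideanSpace ℝ (Fin d)) :
    ⟪u, x⟫ = (WithLp.equiv 2 (Fin d → ℝ) u) ⬝ᵥ (WithLp.equiv 2 (Fin d → ℝ) x) := by
  simp [PiLp.inner_apply, dotProduct, RCLike.inner_apply, mul_comm]

lemma vecMulVec_mulVec' {d : ℕ} (w v x : Fin d → ℝ) :
    (vecMulVec w v) *ᵥ x = (v ⬝ᵥ x) • w := by
  funext i
  simp [mulVec, vecMulVec_apply, dotProduct, Finset.sum_mul, Finset.mul_sum, mul_comm, mul_assoc,
    mul_left_comm]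

theorem dist_to_singular_eq {d : ℕ} (hd : 0 < d) (A : Matrix (Fin d) (Fin d) ℝ)
    (hA : IsUnit A) :
    (∃ B : Matrix (Fin d) (Fin d) ℝ, (∃ v : Fin d → ℝ, v ≠ 0 ∧ B *ᵥ v = 0) ∧
        opNorm (A - B) = 1 / opNorm A⁻¹) ∧
      sInf {r : ℝ | ∃ B : Matrix (Fin d) (Fin d) ℝ,
          (∃ v : Fin d → ℝ, v ≠ 0 ∧ B *ᵥ v = 0) ∧ r = opNorm (A - B)} =
        1 / opNorm A⁻¹ := by
  classical
  haveI : Nonempty (Fin d) := Fin.pos_iff_nonempty.mp hd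
  set T := Matrix.toEuclideanCLM (𝕜 := ℝ) A with hT
  set S := Matrix.toEuclideanCLM (𝕜 := ℝ) A⁻¹ with hS
  have hdet : IsUnit A.det := (Matrix.isUnit_iff_isUnit_det A).mp hA
  have hTS : T * S = 1 := by
    rw [hT, hS, ← _root_.map_mul _ _ _, Matrix.mul_nonsing_inv A hdet, _root_.map_one _]
  have hST : S * T = 1 := by
    rw [hT, hS, ← _root_.map_mul _ _ _, Matrix.nonsing_inv_mul A hdet, _root_.map_one _]
  have hSTx : ∀ x, S (T x) = x := fun x => by
    have := ContinuousLinearMap.ext_iff.mp hST x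
    simpa [ContinuousLinearMap.mul_apply] using this
  have hTSx : ∀ x, T (S x) = x := fun x => by
    have := ContinuousLinearMap.ext_iff.mp hTS x
    simpa [ContinuousLinearMap.mul_apply] using this
  have hOp : opNorm A⁻¹ = ‖S‖ := rfl
  have hSnorm : 0 < ‖S‖ := by
    obtain ⟨x, hx⟩ := exists_ne (0 : EuclideanSpace ℝ (Fin d))
    have hS0 : S ≠ 0 := by
      intro h
      exact hx (by rw [← hSTx x, h]; simp)
    exact norm_pos_iff.mpr hS0
  -- lower bound for all singular matrices
  have lower : ∀ B' : Matrix (Fin d) (Fin d) ℝ, (∃ v : Fin d → ℝ, v ≠ 0 ∧ B' *ᵥ v = 0) →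
      1 / ‖S‖ ≤ opNorm (A - B') := by
    rintro B' ⟨v, hv, hv0⟩
    set x : EuclideanSpace ℝ (Fin d) := (WithLp.equiv 2 (Fin d → ℝ)).symm v with hx
    have hxne : x ≠ 0 := by
      intro h
      exact hv (by simpa [hx] using congrArg (WithLp.equiv 2 (Fin d → ℝ)) h)
    have hxpos : (0:ℝ) < ‖x‖ := norm_pos_iff.mpr hxne
    set D := Matrix.toEuclideanCLM (𝕜 := ℝ) (A - B') with hD
    have hDx : D x = T x := by
      rw [hD, hT, hx, WithLp.equiv_symm_apply, Matrix.toEuclideanCLM_toLp,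
        Matrix.toEuclideanCLM_toLp]
      congr 1
      rw [Matrix.sub_mulVec, hv0, sub_zero]
    have key : ‖x‖ ≤ ‖S‖ * (‖D‖ * ‖x‖) := by
      calc ‖x‖ = ‖S (T x)‖ := by rw [hSTx]
      _ ≤ ‖S‖ * ‖T x‖ := S.le_opNorm _
      _ = ‖S‖ * ‖D x‖ := by rw [hDx]
      _ ≤ ‖S‖ * (‖D‖ * ‖x‖) := by
          exact mul_le_mul_of_nonneg_left (D.le_opNorm x) (norm_nonneg S)
    have : 1 ≤ ‖S‖ * ‖D‖ := by
      nlinarith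
    rw [div_le_iff₀ hSnorm, mul_comm]
    exact this
  -- construction of the optimal B
  obtain ⟨w, hw1, hwS⟩ := exists_norm_attained hd S
  set u : EuclideanSpace ℝ (Fin d) := S w with hu
  have hTu : T u = w := hTSx w
  have hun : ‖u‖ = ‖S‖ := by rw [hu, hwS]
  have hupos : 0 < ‖u‖ := hun ▸ hSnorm
  set u' : Fin d → ℝ := WithLp.equiv 2 (Fin d → ℝ) u with hu'
  set w' : Fin d → ℝ := WithLp.equiv 2 (Fin d → ℝ) w with hw'
  set c : ℝ := (‖u‖^2)⁻¹ with hc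
  have hcpos : 0 < c := by positivity
  set R : Matrix (Fin d) (Fin d) ℝ := c • vecMulVec w' u' with hR
  have hRmul : ∀ y : Fin d → ℝ, R *ᵥ y = (c * (u' ⬝ᵥ y)) • w' := fun y => by
    rw [hR, smul_mulVec, vecMulVec_mulVec', smul_smul]
  have hRclm : ∀ y : EuclideanSpace ℝ (Fin d),
      Matrix.toEuclideanCLM (𝕜 := ℝ) R y = (c * ⟪u, y⟫) • w := fun y => by
    have h1 : WithLp.equiv 2 (Fin d → ℝ) (Matrix.toEuclideanCLM (𝕜 := ℝ) R y)
        = R *ᵥ (WithLp.equiv 2 (Fin d → ℝ) y) := by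
      exact Matrix.ofLp_toEuclideanCLM R y
    apply (WithLp.equiv 2 (Fin d → ℝ)).injective
    rw [h1, hRmul, inner_eq_dot]
    simp [hw', hu']
  have hRu : Matrix.toEuclideanCLM (𝕜 := ℝ) R u = w := by
    rw [hRclm u, real_inner_self_eq_norm_sq, hc]
    rw [inv_mul_cancel₀ (by positivity), one_smul]
  -- norm of R
  have hRnorm : opNorm R = 1 / ‖S‖ := by
    have hle : ‖Matrix.toEuclideanCLM (𝕜 := ℝ) R‖ ≤ 1 / ‖u‖ := by
      refine ContinuousLinearMap.opNorm_le_bound _ (by positivity) fun y => ?_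
      rw [hRclm y, norm_smul, hw1, mul_one]
      have hcs : |⟪u, y⟫| ≤ ‖u‖ * ‖y‖ := abs_real_inner_le_norm u y
      rw [Real.norm_eq_abs, abs_mul, abs_of_pos hcpos]
      calc c * |⟪u, y⟫| ≤ c * (‖u‖ * ‖y‖) :=
        mul_le_mul_of_nonneg_left hcs hcpos.le
      _ = 1 / ‖u‖ * ‖y‖ := by rw [hc]; field_simp
    have hge : 1 / ‖u‖ ≤ ‖Matrix.toEuclideanCLM (𝕜 := ℝ) R‖ := by
      have h1 : (1:ℝ) = ‖Matrix.toEuclideanCLM (𝕜 := ℝ) R u‖ := by rw [hRu, hw1]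
      have h2 := (Matrix.toEuclideanCLM (𝕜 := ℝ) R).le_opNorm u
      rw [div_le_iff₀ hupos]
      rw [← h1] at h2
      linarith
    have : opNorm R = 1 / ‖u‖ := le_antisymm hle hge
    rw [this, hun]
  -- B is singular with witness u'
  have hu'ne : u' ≠ 0 := by
    intro h
    have : u = 0 := by
      apply (WithLp.equiv 2 (Fin d → ℝ)).injective
      simpa [hu'] using h
    exact hupos.ne' (by rw [this, norm_zero])
  have hAu' : A *ᵥ u' = w' := by
    show A *ᵥ u' = WithLp.equiv 2 (Fin d → ℝ) w
    rw [← hTu, hT]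
    exact (Matrix.ofLp_toEuclideanCLM (𝕜 := ℝ) A u).symm
  have hBu' : (A - R) *ᵥ u' = 0 := by
    rw [Matrix.sub_mulVec, hAu', hRmul]
    have : u' ⬝ᵥ u' = ‖u‖^2 := by
      rw [← inner_eq_dot, real_inner_self_eq_norm_sq]
    rw [this, hc, inv_mul_cancel₀ (by positivity), one_smul, sub_self]
  have hmemval : opNorm (A - (A - R)) = 1 / opNorm A⁻¹ := by
    rw [sub_sub_cancel, hRnorm, hOp]
  have hBmem : ∃ B : Matrix (Fin d) (Fin d) ℝ, (∃ v : Fin d → ℝ, v ≠ 0 ∧ B *ᵥ v = 0) ∧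
      opNorm (A - B) = 1 / opNorm A⁻¹ := ⟨A - R, ⟨u', hu'ne, hBu'⟩, hmemval⟩
  refine ⟨hBmem, ?_⟩
  have hmemS : (1 / opNorm A⁻¹) ∈ {r : ℝ | ∃ B : Matrix (Fin d) (Fin d) ℝ,
      (∃ v : Fin d → ℝ, v ≠ 0 ∧ B *ᵥ v = 0) ∧ r = opNorm (A - B)} :=
    ⟨A - R, ⟨u', hu'ne, hBu'⟩, hmemval.symm⟩
  have hlb : ∀ r ∈ {r : ℝ | ∃ B : Matrix (Fin d) (Fin d) ℝ,
      (∃ v : Fin d → ℝ, v ≠ 0 ∧ B *ᵥ v = 0) ∧ r = opNorm (A - B)}, 1 / opNorm A⁻¹ ≤ r := by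
    rintro r ⟨B', hsing, rfl⟩
    rw [hOp]
    exact lower B' hsing
  exact le_antisymm (csInf_le ⟨1 / opNorm A⁻¹, hlb⟩ hmemS) (le_csInf ⟨_, hmemS⟩ hlb)
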